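/- For n = 2, the 4×4 matrix m_1(μ, μ+1/2) (the vortex block evaluated at ν = μ + 1/2) has eigenvalues 0, 3μ, and μ² + 1/2 ± √((μ²+1/2)² + μ(μ+2)(2μ+1)). In particular, for μ < −2 it has exactly two positive eigenvalues, one zero eigenvalue and one negative eigenvalue. -/

import Mathlib

open Matrix Complex Polynomial

/-- The `k = 1` vortex block for `n = 2`. -/
noncomputable def m₁n2 (μ ν : ℝ) : Matrix (Fin 4) (Fin 4) ℂ :=
  !![(μ * (μ + 5 / 2) : ℝ), -(Complex.I * ν * μ), (-(Real.sqrt 2 * μ) : ℝ), 0;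
     Complex.I * ν * μ, (μ * (μ - 3 / 2) : ℝ), 0, (Real.sqrt 2 * μ : ℝ);
     (-(Real.sqrt 2 * μ) : ℝ), 0, (2 * μ + 1 / 2 : ℝ), -(Complex.I * ν);
     0, (Real.sqrt 2 * μ : ℝ), Complex.I * ν, (1 / 2 : ℝ)]

/-- Explicit Laplace expansion of a `4 × 4` determinant. -/
theorem detFinFour {R : Type*} [CommRing R] (A : Matrix (Fin 4) (Fin 4) R) :
    A.det =
      A 0 0 * (A 1 1 * (A 2 2 * A 3 3 - A 2 3 * A 3 2) - A 1 2 * (A 2 1 * A 3 3 - A 2 3 * A 3 1)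
        + A 1 3 * (A 2 1 * A 3 2 - A 2 2 * A 3 1))
    - A 0 1 * (A 1 0 * (A 2 2 * A 3 3 - A 2 3 * A 3 2) - A 1 2 * (A 2 0 * A 3 3 - A 2 3 * A 3 0)
        + A 1 3 * (A 2 0 * A 3 2 - A 2 2 * A 3 0))
    + A 0 2 * (A 1 0 * (A 2 1 * A 3 3 - A 2 3 * A 3 1) - A 1 1 * (A 2 0 * A 3 3 - A 2 3 * A 3 0)
        + A 1 3 * (A 2 0 * A 3 1 - A 2 1 * A 3 0))
    - A 0 3 * (A 1 0 * (A 2 1 * A 3 2 - A 2 2 * A 3 1) - A 1 1 * (A 2 0 * A 3 2 - A 2 2 * A 3 0)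
        + A 1 2 * (A 2 0 * A 3 1 - A 2 1 * A 3 0)) := by
  rw [Matrix.det_succ_row_zero]
  simp [Fin.sum_univ_succ, Matrix.det_fin_three, Matrix.submatrix_apply, Fin.succAbove]
  ring

set_option maxHeartbeats 1000000 in
theorem eigenvalues_m1_n2_on_curve (μ : ℝ) :
    (m₁n2 μ (μ + 1 / 2)).charpoly =
      (X - C 0) * (X - C ((3 * μ : ℝ) : ℂ)) *
      (X - C ((μ ^ 2 + 1 / 2 +
        Real.sqrt ((μ ^ 2 + 1 / 2) ^ 2 + μ * (μ + 2) * (2 * μ + 1)) : ℝ) : ℂ)) *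
      (X - C ((μ ^ 2 + 1 / 2 -
        Real.sqrt ((μ ^ 2 + 1 / 2) ^ 2 + μ * (μ + 2) * (2 * μ + 1)) : ℝ) : ℂ)) ∧
    (μ < -2 →
      3 * μ < 0 ∧
      0 < μ ^ 2 + 1 / 2 - Real.sqrt ((μ ^ 2 + 1 / 2) ^ 2 + μ * (μ + 2) * (2 * μ + 1)) ∧
      0 < μ ^ 2 + 1 / 2 + Real.sqrt ((μ ^ 2 + 1 / 2) ^ 2 + μ * (μ + 2) * (2 * μ + 1))) := by
  have hD : (0:ℝ) ≤ (μ ^ 2 + 1 / 2) ^ 2 + μ * (μ + 2) * (2 * μ + 1) := by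
    nlinarith [sq_nonneg (μ^2+μ), sq_nonneg (μ+1/5), sq_nonneg μ]
  constructor
  · have hs2 : ((Real.sqrt ((μ ^ 2 + 1 / 2) ^ 2 + μ * (μ + 2) * (2 * μ + 1)) : ℝ) : ℂ)^2
        = ((μ:ℂ)^2 + 1/2)^2 + (μ:ℂ) * ((μ:ℂ) + 2) * (2*(μ:ℂ) + 1) := by
      rw [← Complex.ofReal_pow, Real.sq_sqrt hD]; push_cast; ring
    have h2 : ((Real.sqrt 2 : ℝ) : ℂ)^2 = 2 := by
      rw [← Complex.ofReal_pow, Real.sq_sqrt (by norm_num : (0:ℝ) ≤ 2)]; norm_num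
    rw [Matrix.charpoly, detFinFour]
    apply Polynomial.funext
    intro x
    simp only [charmatrix_apply, m₁n2, Matrix.diagonal_apply, Matrix.map_apply,
      Matrix.cons_val', Matrix.cons_val_zero, Matrix.cons_val_one, Matrix.head_cons,
      Matrix.empty_val', Matrix.cons_val_fin_one, Matrix.head_fin_const, Matrix.one_apply,
      Matrix.cons_val_succ, Matrix.of_apply, Matrix.cons_val, eval_add, eval_sub, eval_mul, eval_pow, eval_X, eval_C, eval_one,
      eval_neg, eval_ofNat, eval_zero]
    norm_num (config := { decide := true }) [eval_zero, eval_mul, eval_add, eval_sub, eval_neg,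
      eval_X, eval_C, eval_pow, eval_one]
    linear_combination
      (-(15:ℂ)/16*(μ:ℂ)^2 + 1/16*(μ:ℂ)^2*Complex.I^2 - 7/2*(μ:ℂ)^3
        - 1/2*(μ:ℂ)^3*((Real.sqrt 2:ℝ):ℂ)^2
        + 1/2*(μ:ℂ)^3*Complex.I^2 - 11/4*(μ:ℂ)^4 - 2*(μ:ℂ)^4*((Real.sqrt 2:ℝ):ℂ)^2
        + 3/2*(μ:ℂ)^4*Complex.I^2 + (μ:ℂ)^5 - 2*(μ:ℂ)^5*((Real.sqrt 2:ℝ):ℂ)^2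
        + 2*(μ:ℂ)^5*Complex.I^2 + (μ:ℂ)^6*Complex.I^2
        - 1/4*x*(μ:ℂ) - 7/4*x*(μ:ℂ)^2 - 9/2*x*(μ:ℂ)^3 - 5*x*(μ:ℂ)^4 - 2*x*(μ:ℂ)^5
        + 1/4*x^2 + x^2*(μ:ℂ) + 5/4*x^2*(μ:ℂ)^2 + x^2*(μ:ℂ)^3 + x^2*(μ:ℂ)^4) * Complex.I_sq
      + (-(2:ℂ)*(μ:ℂ)^4 + (μ:ℂ)^4*((Real.sqrt 2:ℝ):ℂ)^2 + x*(μ:ℂ)^2 + 3*x*(μ:ℂ)^3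
        + 2*x*(μ:ℂ)^4 - 2*x^2*(μ:ℂ)^2) * h2
      + (x*(x - 3*(μ:ℂ))) * hs2
  · intro hμ
    refine ⟨by linarith, ?_, ?_⟩
    · have h1 : (0:ℝ) < μ ^ 2 + 1 / 2 := by positivity
      have h2 : Real.sqrt ((μ ^ 2 + 1 / 2) ^ 2 + μ * (μ + 2) * (2 * μ + 1)) < μ ^ 2 + 1 / 2 := by
        rw [Real.sqrt_lt' h1]
        have hp : 0 < μ * (μ + 2) := mul_pos_of_neg_of_neg (by linarith) (by linarith)
        nlinarith [mul_neg_of_pos_of_neg hp (show 2 * μ + 1 < 0 by linarith)]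
      linarith
    · have := Real.sqrt_nonneg ((μ ^ 2 + 1 / 2) ^ 2 + μ * (μ + 2) * (2 * μ + 1))
      nlinarith
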